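/- For a smooth strictly positive scalar field ρ on T^d, the Bohm potential identity (ħ²/2) ρ ∇(Δ√ρ / √ρ) = (ħ²/4) Div(ρ ∇² log ρ) holds pointwise, where ∇² denotes the Hessian. -/

import Mathlib

/-- Partial derivative `∂f/∂x_i` of a scalar field on `ℝ^d`. -/
noncomputable def pd {d : ℕ} (f : (Fin d → ℝ) → ℝ) (i : Fin d) (x : Fin d → ℝ) : ℝ :=
  fderiv ℝ f x (Pi.single i 1)

/-- Laplacian of a scalar field on `ℝ^d`. -/
noncomputable def lap {d : ℕ} (f : (Fin d → ℝ) → ℝ) (x : Fin d → ℝ) : ℝ :=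
  ∑ i, pd (pd f i) i x

section Helpers

variable {d : ℕ} {f g : (Fin d → ℝ) → ℝ} {x : Fin d → ℝ}

lemma contDiff_pd {n m : WithTop ℕ∞} (hf : ContDiff ℝ n f) (hmn : m + 1 ≤ n) (i : Fin d) :
    ContDiff ℝ m (pd f i) :=
  (hf.fderiv_right hmn).clm_apply contDiff_const

lemma pd_mul (i : Fin d) (hf : DifferentiableAt ℝ f x) (hg : DifferentiableAt ℝ g x) :
    pd (fun y => f y * g y) i x = pd f i x * g x + f x * pd g i x := by
  simp only [pd, fderiv_fun_mul hf hg, ContinuousLinearMap.add_apply, ContinuousLinearMap.smul_apply,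
    smul_eq_mul]
  ring

lemma pd_sub (i : Fin d) (hf : DifferentiableAt ℝ f x) (hg : DifferentiableAt ℝ g x) :
    pd (fun y => f y - g y) i x = pd f i x - pd g i x := by
  simp only [pd, fderiv_fun_sub hf hg, ContinuousLinearMap.sub_apply]

lemma pd_const_mul (i : Fin d) (hf : DifferentiableAt ℝ f x) (c : ℝ) :
    pd (fun y => c * f y) i x = c * pd f i x := by
  simp only [pd, fderiv_const_mul hf c, ContinuousLinearMap.smul_apply, smul_eq_mul]

lemma pd_sq (i : Fin d) (hf : DifferentiableAt ℝ f x) :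
    pd (fun y => f y ^ 2) i x = 2 * f x * pd f i x := by
  have h : (fun y => f y ^ 2) = fun y => f y * f y := funext fun y => sq (f y)
  rw [h, pd_mul i hf hf]; ring

lemma pd_inv (i : Fin d) (hf : DifferentiableAt ℝ f x) (hx : f x ≠ 0) :
    pd (fun y => (f y)⁻¹) i x = -pd f i x / f x ^ 2 := by
  have h : HasFDerivAt (fun y => (f y)⁻¹) (-(f x ^ 2)⁻¹ • fderiv ℝ f x) x :=
    (hasDerivAt_inv hx).comp_hasFDerivAt x hf.hasFDerivAt
  rw [pd, h.fderiv]
  simp only [pd, ContinuousLinearMap.smul_apply, smul_eq_mul]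
  field_simp

lemma pd_div (i : Fin d) (hf : DifferentiableAt ℝ f x) (hg : DifferentiableAt ℝ g x)
    (hx : g x ≠ 0) :
    pd (fun y => f y / g y) i x = (pd f i x * g x - f x * pd g i x) / g x ^ 2 := by
  have h : (fun y => f y / g y) = fun y => f y * (g y)⁻¹ :=
    funext fun y => div_eq_mul_inv _ _
  rw [h, pd_mul (g := fun y => (g y)⁻¹) i hf (hg.inv hx), pd_inv i hg hx]
  field_simp
  ring

lemma pd_sqrt (i : Fin d) (hf : DifferentiableAt ℝ f x) (hx : f x ≠ 0) :
    pd (fun y => Real.sqrt (f y)) i x = pd f i x / (2 * Real.sqrt (f x)) := by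
  have h := hf.hasFDerivAt.sqrt hx
  rw [pd, h.fderiv]
  simp only [pd, ContinuousLinearMap.smul_apply, smul_eq_mul]
  ring

lemma pd_log (i : Fin d) (hf : DifferentiableAt ℝ f x) (hx : f x ≠ 0) :
    pd (fun y => Real.log (f y)) i x = pd f i x / f x := by
  have h := hf.hasFDerivAt.log hx
  rw [pd, h.fderiv]
  simp only [pd, ContinuousLinearMap.smul_apply, smul_eq_mul]
  field_simp

lemma pd_sum {n : ℕ} (i : Fin d) (F : Fin n → (Fin d → ℝ) → ℝ)
    (h : ∀ j, DifferentiableAt ℝ (F j) x) :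
    pd (fun y => ∑ j, F j y) i x = ∑ j, pd (F j) i x := by
  simp only [pd]
  rw [fderiv_fun_sum fun j _ => h j]
  simp

lemma pd_comm (hf : ContDiff ℝ 2 f) (i j : Fin d) (x : Fin d → ℝ) :
    pd (pd f i) j x = pd (pd f j) i x := by
  have hd1 : Differentiable ℝ f := hf.differentiable two_ne_zero
  have hd2 : Differentiable ℝ (fderiv ℝ f) :=
    (hf.fderiv_right (m := 1) (by norm_num)).differentiable one_ne_zero
  have hsymm := second_derivative_symmetric (f := f)
    (fun y => (hd1 y).hasFDerivAt) (hd2 x).hasFDerivAt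
  have hev : ∀ v w : Fin d → ℝ,
      fderiv ℝ (fun y => fderiv ℝ f y v) x w = fderiv ℝ (fderiv ℝ f) x w v := by
    intro v w
    have h : HasFDerivAt (fun y => fderiv ℝ f y v)
        ((ContinuousLinearMap.apply ℝ ℝ v).comp (fderiv ℝ (fderiv ℝ f) x)) x :=
      (ContinuousLinearMap.apply ℝ ℝ v).hasFDerivAt.comp x (hd2 x).hasFDerivAt
    rw [h.fderiv]; rfl
  show fderiv ℝ (fun y => fderiv ℝ f y (Pi.single i 1)) x (Pi.single j 1)
      = fderiv ℝ (fun y => fderiv ℝ f y (Pi.single j 1)) x (Pi.single i 1)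
  rw [hev, hev]
  exact hsymm _ _

lemma diffAt_div (hf : DifferentiableAt ℝ f x) (hg : DifferentiableAt ℝ g x) (hx : g x ≠ 0) :
    DifferentiableAt ℝ (fun y => f y / g y) x := by
  simp only [div_eq_mul_inv]
  exact hf.mul (hg.inv hx)

end Helpers

/-- **Bohm potential identity** on the torus (functions on `ℝ^d` periodic with
respect to `ℤ^d`): for a `C³` strictly positive scalar field `ρ`,
`(ħ²/2) ρ ∇(Δ√ρ / √ρ) = (ħ²/4) Div(ρ ∇² log ρ)`, where `Div` of the matrix field
`ρ ∇² log ρ` is taken row-wise. -/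
theorem bohm_potential_identity {d : ℕ} (hbar : ℝ) (hhbar : 0 < hbar)
    (ρ : (Fin d → ℝ) → ℝ) (hρ : ContDiff ℝ 3 ρ) (hpos : ∀ x, 0 < ρ x)
    (hper : ∀ (x : Fin d → ℝ) (k : Fin d → ℤ), ρ (x + fun i => (k i : ℝ)) = ρ x)
    (x : Fin d → ℝ) (i : Fin d) :
    hbar ^ 2 / 2 * ρ x *
        pd (fun y => lap (fun z => Real.sqrt (ρ z)) y / Real.sqrt (ρ y)) i x
      = hbar ^ 2 / 4 *
        ∑ j, pd (fun y => ρ y *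
          pd (fun z => pd (fun w => Real.log (ρ w)) j z) i y) j x := by
  clear hhbar hper
  have hρd : Differentiable ℝ ρ := hρ.differentiable (by norm_num)
  have hρne : ∀ y, ρ y ≠ 0 := fun y => (hpos y).ne'
  have hA : ∀ j, ContDiff ℝ 2 (pd ρ j) := fun j => contDiff_pd hρ (by norm_num) j
  have hAd : ∀ j, Differentiable ℝ (pd ρ j) := fun j => (hA j).differentiable two_ne_zero
  have hBd : ∀ j k, Differentiable ℝ (pd (pd ρ j) k) := fun j k =>
    (contDiff_pd (m := 1) (hA j) (by norm_num) k).differentiable one_ne_zero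
  have hsd : Differentiable ℝ (fun z => Real.sqrt (ρ z)) := fun y =>
    ((hρd y).hasFDerivAt.sqrt (hρne y)).differentiableAt
  -- Step 1 : rewrite Δ√ρ / √ρ in terms of ρ only
  have hLfun : (fun y => lap (fun z => Real.sqrt (ρ z)) y / Real.sqrt (ρ y))
      = fun y => ∑ j, (pd (pd ρ j) j y / (2 * ρ y) - (pd ρ j y) ^ 2 / (4 * ρ y ^ 2)) := by
    funext y
    simp only [lap]
    rw [Finset.sum_div]
    refine Finset.sum_congr rfl fun j _ => ?_
    have h1 : pd (fun z => Real.sqrt (ρ z)) j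
        = fun z => pd ρ j z / (2 * Real.sqrt (ρ z)) :=
      funext fun z => pd_sqrt j (hρd z) (hρne z)
    have hs0 : Real.sqrt (ρ y) ≠ 0 := Real.sqrt_ne_zero'.mpr (hpos y)
    rw [h1, pd_div j (hAd j y) ((hsd y).const_mul 2) (mul_ne_zero two_ne_zero hs0),
      pd_const_mul j (hsd y) 2, pd_sqrt j (hρd y) (hρne y)]
    set t := Real.sqrt (ρ y) with ht
    have htt : t * t = ρ y := Real.mul_self_sqrt (hpos y).le
    rw [← htt]
    have ht0 : t ≠ 0 := hs0
    field_simp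
    ring
  -- differentiability of the summands
  have hdiffterm : ∀ j y, DifferentiableAt ℝ
      (fun y => pd (pd ρ j) j y / (2 * ρ y) - (pd ρ j y) ^ 2 / (4 * ρ y ^ 2)) y := by
    intro j y
    exact (diffAt_div (hBd j j y) ((hρd y).const_mul 2) (mul_ne_zero two_ne_zero (hρne y))).sub
      (diffAt_div ((hAd j y).pow 2) (((hρd y).pow 2).const_mul 4)
        (mul_ne_zero four_ne_zero (pow_ne_zero 2 (hρne y))))
  -- Step 2 : rewrite the RHS summands in terms of ρ only
  have hRterm : ∀ j, pd (fun y => ρ y *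
        pd (fun z => pd (fun w => Real.log (ρ w)) j z) i y) j x
      = pd (pd (pd ρ j) i) j x -
        ((pd (pd ρ j) j x * pd ρ i x + pd ρ j x * pd (pd ρ i) j x) * ρ x
          - pd ρ j x * pd ρ i x * pd ρ j x) / ρ x ^ 2 := by
    intro j
    have h1 : (fun z => pd (fun w => Real.log (ρ w)) j z) = fun z => pd ρ j z / ρ z :=
      funext fun z => pd_log j (hρd z) (hρne z)
    have h2 : (fun y => ρ y * pd (fun z => pd (fun w => Real.log (ρ w)) j z) i y)
        = fun y => pd (pd ρ j) i y - pd ρ j y * pd ρ i y / ρ y := by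
      funext y
      rw [h1, pd_div i (hAd j y) (hρd y) (hρne y)]
      field_simp [hρne y]
    rw [h2, pd_sub j (hBd j i x) (diffAt_div (f := fun y => pd ρ j y * pd ρ i y) ((hAd j x).mul (hAd i x)) (hρd x) (hρne x)),
      pd_div (f := fun y => pd ρ j y * pd ρ i y) j ((hAd j x).mul (hAd i x)) (hρd x) (hρne x),
      pd_mul j (hAd j x) (hAd i x)]
  -- Step 3 : assemble
  rw [hLfun, pd_sum i _ (fun j => hdiffterm j x), Finset.mul_sum, Finset.mul_sum]
  refine Finset.sum_congr rfl fun j _ => ?_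
  rw [hRterm j]
  rw [pd_sub i (diffAt_div (hBd j j x) ((hρd x).const_mul 2) (mul_ne_zero two_ne_zero (hρne x)))
      (diffAt_div (f := fun y => pd ρ j y ^ 2) (g := fun y => 4 * ρ y ^ 2) ((hAd j x).pow 2) (((hρd x).pow 2).const_mul 4)
        (mul_ne_zero four_ne_zero (pow_ne_zero 2 (hρne x)))),
    pd_div i (hBd j j x) ((hρd x).const_mul 2) (mul_ne_zero two_ne_zero (hρne x)),
    pd_const_mul i (hρd x) 2,
    pd_div (f := fun y => pd ρ j y ^ 2) (g := fun y => 4 * ρ y ^ 2) i ((hAd j x).pow 2) (((hρd x).pow 2).const_mul 4)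
      (mul_ne_zero four_ne_zero (pow_ne_zero 2 (hρne x))),
    pd_sq i (hAd j x), pd_const_mul (f := fun y => ρ y ^ 2) i ((hρd x).pow 2) 4, pd_sq i (hρd x)]
  have hsy1 : pd (pd ρ i) j x = pd (pd ρ j) i x := pd_comm (hρ.of_le (by norm_num)) i j x
  have hsy2 : pd (pd (pd ρ j) i) j x = pd (pd (pd ρ j) j) i x := pd_comm (hA j) i j x
  rw [hsy1, hsy2]
  field_simp [hρne x]
  ring
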